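/- Let the semistar K_{b_0}(b_1,…,b_k) be recursively partitionable and let G_0,…,G_k be recursively partitionable graphs with n(G_i) = b_i. Then the replacement graph H = G_0 + (G_1 ∪ G_2 ∪ … ∪ G_k), where G_0 is joined completely to the disjoint union of G_1,…,G_k, is recursively partitionable. -/

import Mathlib

open Finset

/-- `G.IsRP A` : the subgraph of `G` induced by the vertex set `A` is recursively
partitionable (RP): either `|A| = 1`, or `G[A]` is connected and for every integer partition
`a₁, …, a_k` (with `k ≥ 2`) of `|A|` there is a partition of `A` into parts of exactly these
sizes, each of which again induces an RP subgraph.  (The guard `B.card < A.card` is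
automatically satisfied by every part of such a partition; it is only needed for
well-foundedness of the recursion.) -/
def SimpleGraph.IsRP {V : Type} [DecidableEq V] (G : SimpleGraph V) (A : Finset V) : Prop :=
  A.card = 1 ∨ ((G.induce (A : Set V)).Connected ∧
    ∀ l : List ℕ, (∀ a ∈ l, 0 < a) → 2 ≤ l.length → l.sum = A.card →
      ∃ P : List (Finset V), P.map Finset.card = l ∧ P.Pairwise _root_.Disjoint ∧
        P.foldr (· ∪ ·) ∅ = A ∧ ∀ B ∈ P, ∀ _ : B.card < A.card, G.IsRP B)
termination_by A.card

/-- The join `G₀ + (G₁ ∪ ⋯ ∪ G_k)` of a graph `G₀` with the disjoint union of the graphs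
`G i`, `i : Fin k`: every vertex of `G₀` is joined to every other vertex. -/
def SimpleGraph.repJoin {V₀ : Type} {k : ℕ} {V : Fin k → Type}
    (G₀ : SimpleGraph V₀) (G : ∀ i, SimpleGraph (V i)) :
    SimpleGraph (V₀ ⊕ Σ i, V i) where
  Adj a b :=
    match a, b with
    | Sum.inl x, Sum.inl y => G₀.Adj x y
    | Sum.inl _, Sum.inr _ => True
    | Sum.inr _, Sum.inl _ => True
    | Sum.inr x, Sum.inr y => ∃ h : x.1 = y.1, (G y.1).Adj (h ▸ x.2) y.2
  symm := by
    constructor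
    rintro (x | ⟨i, x⟩) (y | ⟨j, y⟩) h
    · exact h.symm
    · trivial
    · trivial
    · obtain ⟨h, hadj⟩ := h
      dsimp only at h
      subst h
      exact ⟨rfl, (G i).adj_symm hadj⟩
  loopless := by
    constructor
    rintro (x | ⟨i, x⟩) h
    · exact G₀.ne_of_adj h rfl
    · obtain ⟨h', hadj⟩ := h
      exact (G i).ne_of_adj hadj rfl

/-- The semistar `K_{b₀}(c₁, …, c_k)`: the join of the clique `K_{b₀}` with the disjoint
union of the cliques `K_{c i}`, `i : Fin k`. -/
def SimpleGraph.semistar (b₀ : ℕ) {k : ℕ} (c : Fin k → ℕ) :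
    SimpleGraph (Fin b₀ ⊕ Σ i, Fin (c i)) :=
  SimpleGraph.repJoin (⊤ : SimpleGraph (Fin b₀)) (fun i => (⊤ : SimpleGraph (Fin (c i))))


section helpers
variable {V : Type} [DecidableEq V]

lemma mem_foldrUnion {x : V} {P : List (Finset V)} :
    x ∈ P.foldr (· ∪ ·) ∅ ↔ ∃ B ∈ P, x ∈ B := by
  induction P with
  | nil => simp
  | cons B P ih => simp [ih]

lemma subset_foldrUnion {B : Finset V} {P : List (Finset V)} (hB : B ∈ P) :
    B ⊆ P.foldr (· ∪ ·) ∅ :=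
  fun x hx => mem_foldrUnion.2 ⟨B, hB, hx⟩

lemma disjoint_foldrUnion {B : Finset V} {P : List (Finset V)}
    (h : ∀ C ∈ P, Disjoint B C) : Disjoint B (P.foldr (· ∪ ·) ∅) := by
  rw [Finset.disjoint_left]
  intro x hxB hxF
  obtain ⟨C, hC, hxC⟩ := mem_foldrUnion.1 hxF
  exact absurd ((h C hC).le_bot (Finset.mem_inter.2 ⟨hxB, hxC⟩)) (Finset.notMem_empty x)

lemma card_foldrUnion {P : List (Finset V)} (h : P.Pairwise _root_.Disjoint) :
    (P.foldr (· ∪ ·) ∅).card = (P.map Finset.card).sum := by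
  induction P with
  | nil => simp
  | cons B P ih =>
    rw [List.pairwise_cons] at h
    simp only [List.foldr_cons, List.map_cons, List.sum_cons]
    rw [Finset.card_union_of_disjoint (disjoint_foldrUnion h.1), ih h.2]

lemma filter_pos_sum (m : List ℕ) : (m.filter (0 < ·)).sum = m.sum := by
  induction m with
  | nil => simp
  | cons a m ih =>
    rcases Nat.eq_zero_or_pos a with h | h
    · subst h; simpa using ih
    · rw [List.filter_cons_of_pos (by simpa using h)]; simp [ih]

lemma part_card_lt {P : List (Finset V)} {l : List ℕ} {A : Finset V} {B : Finset V}
    (hP : P.map Finset.card = l) (hpd : P.Pairwise _root_.Disjoint)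
    (hU : P.foldr (· ∪ ·) ∅ = A) (hpos : ∀ a ∈ l, 0 < a) (hlen : 2 ≤ l.length)
    (hB : B ∈ P) : B.card < A.card := by
  subst hP hU
  obtain ⟨i, hi, rfl⟩ := List.mem_iff_getElem.1 hB
  have hlen' : 2 ≤ P.length := by simpa using hlen
  set j : ℕ := if i = 0 then 1 else 0 with hj
  have hjlt : j < P.length := by
    rcases Nat.eq_zero_or_pos i with h | h
    · simp only [hj, if_pos h]; omega
    · simp only [hj, if_neg (Nat.pos_iff_ne_zero.1 h)]; omega
  have hij : i ≠ j := by
    rcases Nat.eq_zero_or_pos i with h | h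
    · simp [hj, h]
    · simp only [hj, if_neg (Nat.pos_iff_ne_zero.1 h)]; omega
  have hdisj : Disjoint P[i] P[j] := by
    rcases Nat.lt_or_ge i j with h | h
    · exact List.pairwise_iff_getElem.1 hpd i j hi hjlt h
    · exact (List.pairwise_iff_getElem.1 hpd j i hjlt hi (by omega)).symm
  have hjpos : 0 < P[j].card := hpos _ (by
    rw [List.mem_iff_getElem]
    exact ⟨j, by simpa using hjlt, by simp⟩)
  have hsub : P[i] ∪ P[j] ⊆ P.foldr (· ∪ ·) ∅ :=
    Finset.union_subset (subset_foldrUnion (List.getElem_mem hi))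
      (subset_foldrUnion (List.getElem_mem hjlt))
  calc P[i].card < P[i].card + P[j].card := by omega
    _ = (P[i] ∪ P[j]).card := (Finset.card_union_of_disjoint hdisj).symm
    _ ≤ _ := Finset.card_le_card hsub

lemma foldrUnion_image {W : Type} [DecidableEq W] (f : V → W) (P : List (Finset V)) :
    (P.map (Finset.image f)).foldr (· ∪ ·) ∅ = (P.foldr (· ∪ ·) ∅).image f := by
  induction P with
  | nil => simp
  | cons B P ih => simp [Finset.image_union, ih]

end helpers


-- iso of induced subgraphs
noncomputable def induceIsoOfMap {V W : Type} (G : SimpleGraph V) (G' : SimpleGraph W)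
    (f : V → W) (A : Finset V) [DecidableEq V] [DecidableEq W]
    (hinj : Set.InjOn f A)
    (hadj : ∀ a ∈ A, ∀ b ∈ A, (G.Adj a b ↔ G'.Adj (f a) (f b))) :
    G.induce (A : Set V) ≃g G'.induce ((A.image f : Finset W) : Set W) := by
  have hmem : ∀ a : (A : Set V), f a.1 ∈ ((A.image f : Finset W) : Set W) := by
    intro a; simpa using Finset.mem_image_of_mem f a.2
  refine ⟨Equiv.ofBijective (fun a => ⟨f a.1, hmem a⟩) ⟨?_, ?_⟩, ?_⟩
  · intro a b hab
    exact Subtype.ext (hinj a.2 b.2 (congrArg Subtype.val hab))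
  · rintro ⟨w, hw⟩
    simp only [Finset.coe_image, Set.mem_image, Finset.mem_coe] at hw
    obtain ⟨a, ha, rfl⟩ := hw
    exact ⟨⟨a, ha⟩, rfl⟩
  · intro a b
    simp only [Equiv.ofBijective_apply, SimpleGraph.comap_adj, Function.Embedding.coe_subtype]
    exact (hadj a a.2 b b.2).symm

lemma isRP_map_iff {V W : Type} [DecidableEq V] [DecidableEq W]
    (G : SimpleGraph V) (G' : SimpleGraph W) :
    ∀ (n : ℕ) (A : Finset V) (f : V → W), A.card = n → Set.InjOn f A →
      (∀ a ∈ A, ∀ b ∈ A, (G.Adj a b ↔ G'.Adj (f a) (f b))) →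
      (G.IsRP A ↔ G'.IsRP (A.image f)) := by
  intro n
  induction n using Nat.strong_induction_on with
  | _ n ih =>
  intro A f hn hinj hadj
  have hsub : ∀ {B : Finset V}, B ⊆ A → Set.InjOn f B := fun h => hinj.mono (by exact_mod_cast h)
  have hcardim : (A.image f).card = A.card := Finset.card_image_of_injOn hinj
  have hconn := (induceIsoOfMap G G' f A hinj hadj).connected_iff
  rw [SimpleGraph.IsRP, SimpleGraph.IsRP]
  constructor
  · rintro (h1 | ⟨hc, hpart⟩)
    · exact Or.inl (by rw [hcardim, h1])
    · refine Or.inr ⟨hconn.1 hc, ?_⟩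
      intro l hpos hlen hsum
      obtain ⟨P, hPc, hPd, hPu, hPrp⟩ := hpart l hpos hlen (by rw [hsum, hcardim])
      have hBsub : ∀ B ∈ P, B ⊆ A := fun B hB => hPu ▸ subset_foldrUnion hB
      refine ⟨P.map (fun B => B.image f), ?_, ?_, ?_, ?_⟩
      · rw [List.map_map, ← hPc]
        exact List.map_congr_left fun B hB =>
          Finset.card_image_of_injOn (hsub (hBsub B hB))
      · refine (List.pairwise_map).2 (hPd.imp_of_mem ?_)
        intro B C hB hC hBC
        rw [Finset.disjoint_left]
        rintro x hxB hxC
        obtain ⟨b, hb, rfl⟩ := Finset.mem_image.1 hxB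
        obtain ⟨c, hc', hfc⟩ := Finset.mem_image.1 hxC
        have : c = b := hinj (hBsub C hC hc') (hBsub B hB hb) hfc
        subst this
        exact (Finset.disjoint_left.1 hBC hb) hc'
      · rw [← hPu, ← foldrUnion_image]
      · intro B' hB' hlt
        obtain ⟨B, hB, rfl⟩ := List.mem_map.1 hB'
        have hcB : (B.image f).card = B.card := Finset.card_image_of_injOn (hsub (hBsub B hB))
        have hltB : B.card < A.card := by rw [← hcB, ← hcardim]; exact hlt
        have := hPrp B hB hltB
        exact (ih B.card (hn ▸ hltB) B f rfl (hsub (hBsub B hB))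
          (fun a ha b hb => hadj a (hBsub B hB ha) b (hBsub B hB hb))).1 this
  · rintro (h1 | ⟨hc, hpart⟩)
    · exact Or.inl (by rw [← hcardim, h1])
    · refine Or.inr ⟨hconn.2 hc, ?_⟩
      intro l hpos hlen hsum
      obtain ⟨P', hPc, hPd, hPu, hPrp⟩ := hpart l hpos hlen (by rw [hsum, hcardim])
      have hB'sub : ∀ B' ∈ P', B' ⊆ A.image f := fun B' hB' => hPu ▸ subset_foldrUnion hB'
      set pull : Finset W → Finset V := fun B' => A.filter (fun a => f a ∈ B') with hpull
      have him : ∀ B' ∈ P', (pull B').image f = B' := by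
        intro B' hB'
        ext w
        simp only [hpull, Finset.mem_image, Finset.mem_filter]
        constructor
        · rintro ⟨a, ⟨_, h⟩, rfl⟩; exact h
        · intro hw
          obtain ⟨a, ha, rfl⟩ := Finset.mem_image.1 (hB'sub B' hB' hw)
          exact ⟨a, ⟨ha, hw⟩, rfl⟩
      have hcardpull : ∀ B' ∈ P', (pull B').card = B'.card := by
        intro B' hB'
        conv_rhs => rw [← him B' hB']
        exact (Finset.card_image_of_injOn (hsub (Finset.filter_subset _ _))).symm
      refine ⟨P'.map pull, ?_, ?_, ?_, ?_⟩
      · rw [List.map_map, ← hPc]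
        exact List.map_congr_left fun B' hB' => hcardpull B' hB'
      · refine (List.pairwise_map).2 (hPd.imp ?_)
        intro B' C' hBC
        rw [Finset.disjoint_left]
        rintro x hxB hxC
        simp only [hpull, Finset.mem_filter] at hxB hxC
        exact (Finset.disjoint_left.1 hBC hxB.2) hxC.2
      · ext a
        rw [mem_foldrUnion]
        simp only [List.mem_map, hpull]
        constructor
        · rintro ⟨_, ⟨B', _, rfl⟩, h⟩
          exact (Finset.mem_filter.1 h).1
        · intro ha
          have : f a ∈ A.image f := Finset.mem_image_of_mem f ha
          rw [← hPu, mem_foldrUnion] at this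
          obtain ⟨B', hB', hfa⟩ := this
          exact ⟨pull B', ⟨B', hB', rfl⟩, Finset.mem_filter.2 ⟨ha, hfa⟩⟩
      · intro B hB hlt
        obtain ⟨B', hB', rfl⟩ := List.mem_map.1 hB
        have hlt' : B'.card < (A.image f).card := by
          rw [← hcardpull B' hB', hcardim] at *; exact hlt
        have := hPrp B' hB' hlt'
        have hBsubA : pull B' ⊆ A := Finset.filter_subset _ _
        refine (ih (pull B').card (hn ▸ hlt) (pull B') f rfl (hsub hBsubA)
          (fun a ha b hb => hadj a (hBsubA ha) b (hBsubA hb))).2 ?_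
        rwa [him B' hB']


section splitsec
variable {V : Type} [DecidableEq V] {G : SimpleGraph V}

lemma isRP_nonempty {A : Finset V} (h : G.IsRP A) : A.Nonempty := by
  rw [SimpleGraph.IsRP] at h
  rcases h with h | ⟨hc, -⟩
  · exact Finset.card_pos.1 (by omega)
  · obtain ⟨⟨a, ha⟩⟩ := hc.nonempty
    exact ⟨a, by simpa using ha⟩

lemma interleave {p : Finset V → Prop} :
    ∀ (m : List ℕ) (Q' : List (Finset V)), Q'.map Finset.card = m.filter (0 < ·) →
      (∀ B ∈ Q', p B) → Q'.Pairwise _root_.Disjoint →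
      ∃ Q : List (Finset V), Q.map Finset.card = m ∧ Q.Pairwise _root_.Disjoint ∧
        Q.foldr (· ∪ ·) ∅ = Q'.foldr (· ∪ ·) ∅ ∧ ∀ B ∈ Q, B = ∅ ∨ p B := by
  intro m
  induction m with
  | nil =>
    intro Q' hc _ _
    simp only [List.filter_nil, List.map_eq_nil_iff] at hc
    subst hc
    exact ⟨[], by simp⟩
  | cons a m ih =>
    intro Q' hc hp hd
    rcases Nat.eq_zero_or_pos a with rfl | hapos
    · rw [List.filter_cons_of_neg (by simp)] at hc
      obtain ⟨Q, h1, h2, h3, h4⟩ := ih Q' hc hp hd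
      refine ⟨∅ :: Q, by simpa using h1, ?_, by simpa using h3, ?_⟩
      · exact List.Pairwise.cons (fun C _ => Finset.disjoint_empty_left C) h2
      · intro B hB
        rcases List.mem_cons.1 hB with rfl | hB
        · exact Or.inl rfl
        · exact h4 B hB
    · rw [List.filter_cons_of_pos (by simpa using hapos)] at hc
      match Q', hc with
      | B :: Q'', hc =>
        simp only [List.map_cons, List.cons.injEq] at hc
        rw [List.pairwise_cons] at hd
        obtain ⟨Q, h1, h2, h3, h4⟩ := ih Q'' hc.2 (fun C hC => hp C (List.mem_cons_of_mem _ hC)) hd.2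
        refine ⟨B :: Q, by simp [hc.1, h1], ?_, by simp [h3], ?_⟩
        · refine List.Pairwise.cons ?_ h2
          intro C hC
          have hCsub : C ⊆ Q.foldr (· ∪ ·) ∅ := subset_foldrUnion hC
          have : Disjoint B (Q.foldr (· ∪ ·) ∅) := by
            rw [h3]
            exact disjoint_foldrUnion hd.1
          exact this.mono_right hCsub
        · intro C hC'
          rcases List.mem_cons.1 hC' with rfl | hC
          · exact Or.inr (hp C List.mem_cons_self)
          · exact h4 C hC

lemma splitRP {A : Finset V} (hA : G.IsRP A) (m : List ℕ) (hsum : m.sum = A.card) :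
    ∃ Q : List (Finset V), Q.map Finset.card = m ∧ Q.Pairwise _root_.Disjoint ∧
      Q.foldr (· ∪ ·) ∅ = A ∧ ∀ B ∈ Q, B = ∅ ∨ G.IsRP B := by
  obtain ⟨m', hm'⟩ : ∃ m', m.filter (0 < ·) = m' := ⟨_, rfl⟩
  have hpos : ∀ x ∈ m', 0 < x := fun x hx => by
    rw [← hm'] at hx; simpa using List.of_mem_filter hx
  have hsum' : m'.sum = A.card := by rw [← hm', filter_pos_sum, hsum]
  have hApos : 0 < A.card := Finset.card_pos.2 (isRP_nonempty hA)
  have hQ' : ∃ Q' : List (Finset V), Q'.map Finset.card = m' ∧ Q'.Pairwise _root_.Disjoint ∧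
      Q'.foldr (· ∪ ·) ∅ = A ∧ ∀ B ∈ Q', G.IsRP B := by
    match m', hpos, hsum' with
    | [], _, hsum' => simp only [List.sum_nil] at hsum'; omega
    | [a], _, hsum' =>
      have ha : a = A.card := by simpa using hsum'
      exact ⟨[A], by simp [ha], by simp, by simp, by simpa using hA⟩
    | a :: b :: t, hpos, hsum' =>
      have hlen : 2 ≤ (a :: b :: t).length := by simp
      have h2 : 2 ≤ A.card := by
        have ha := hpos a (by simp)
        have hb := hpos b (by simp)
        simp only [List.sum_cons] at hsum'
        omega
      rw [SimpleGraph.IsRP] at hA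
      rcases hA with h1 | ⟨-, hpart⟩
      · omega
      · obtain ⟨P, hPc, hPd, hPu, hPrp⟩ := hpart (a :: b :: t) hpos hlen hsum'
        refine ⟨P, hPc, hPd, hPu, fun B hB => hPrp B hB ?_⟩
        exact part_card_lt hPc hPd hPu hpos hlen hB
  obtain ⟨Q', h1, h2, h3, h4⟩ := hQ'
  obtain ⟨Q, g1, g2, g3, g4⟩ := interleave m Q' (by rw [hm', h1]) h4 h2
  exact ⟨Q, g1, g2, by rw [g3, h3], g4⟩
end splitsec

section sumfib
variable {α : Type} [DecidableEq α] {k : ℕ} {β : Fin k → Type} [∀ i, DecidableEq (β i)]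

noncomputable def fib0 (S : Finset (α ⊕ Σ i, β i)) : Finset α := S.toLeft

noncomputable def fib (i : Fin k) (S : Finset (α ⊕ Σ i, β i)) : Finset (β i) :=
  S.toRight.preimage (Sigma.mk i) (sigma_mk_injective.injOn)

@[simp] lemma mem_fib0 {S : Finset (α ⊕ Σ i, β i)} {x : α} :
    x ∈ fib0 S ↔ Sum.inl x ∈ S := Finset.mem_toLeft

@[simp] lemma mem_fib {S : Finset (α ⊕ Σ i, β i)} {i : Fin k} {y : β i} :
    y ∈ fib i S ↔ Sum.inr ⟨i, y⟩ ∈ S := by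
  rw [fib, Finset.mem_preimage, Finset.mem_toRight]

lemma fib0_empty : fib0 (∅ : Finset (α ⊕ Σ i, β i)) = ∅ := by ext x; simp
lemma fib_empty (i : Fin k) : fib i (∅ : Finset (α ⊕ Σ i, β i)) = ∅ := by ext y; simp
lemma fib0_union (S T : Finset (α ⊕ Σ i, β i)) : fib0 (S ∪ T) = fib0 S ∪ fib0 T := by
  ext x; simp

lemma fib_union (i : Fin k) (S T : Finset (α ⊕ Σ i, β i)) :
    fib i (S ∪ T) = fib i S ∪ fib i T := by
  ext y; simp

lemma fib0_disjoint {S T : Finset (α ⊕ Σ i, β i)} (h : Disjoint S T) :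
    Disjoint (fib0 S) (fib0 T) := by
  rw [Finset.disjoint_left] at h ⊢
  intro x hx hx'
  exact h (mem_fib0.1 hx) (mem_fib0.1 hx')

lemma fib_disjoint {i : Fin k} {S T : Finset (α ⊕ Σ i, β i)} (h : Disjoint S T) :
    Disjoint (fib i S) (fib i T) := by
  rw [Finset.disjoint_left] at h ⊢
  intro y hy hy'
  exact h (mem_fib.1 hy) (mem_fib.1 hy')

lemma card_fib_sum (S : Finset (α ⊕ Σ i, β i)) :
    S.card = (fib0 S).card + ∑ i, (fib i S).card := by
  rw [← Finset.card_toLeft_add_card_toRight (u := S)]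
  congr 1
  rw [Finset.card_eq_sum_card_fiberwise (f := Sigma.fst) (t := Finset.univ)
    (fun x _ => Finset.mem_univ _)]
  refine Finset.sum_congr rfl fun i _ => ?_
  have : S.toRight.filter (fun a => a.1 = i) = (fib i S).image (Sigma.mk i) := by
    ext ⟨j, y⟩
    simp only [Finset.mem_filter, Finset.mem_image, mem_fib]
    constructor
    · rintro ⟨hmem, rfl⟩
      exact ⟨y, Finset.mem_toRight.1 hmem, rfl⟩
    · rintro ⟨z, hz, hzeq⟩
      obtain ⟨rfl, h2⟩ := Sigma.mk.inj_iff.1 hzeq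
      obtain rfl := eq_of_heq h2
      exact ⟨Finset.mem_toRight.2 hz, rfl⟩
  rw [this, Finset.card_image_of_injective _ sigma_mk_injective]

lemma sum_card_hom {X Y : Type} [DecidableEq X] [DecidableEq Y] (F : Finset X → Finset Y)
    (hU : ∀ S T, F (S ∪ T) = F S ∪ F T)
    (hdisj : ∀ S T, Disjoint S T → Disjoint (F S) (F T)) (hE : F ∅ = ∅) :
    ∀ (P : List (Finset X)), P.Pairwise _root_.Disjoint →
      (P.map (fun S => (F S).card)).sum = (F (P.foldr (· ∪ ·) ∅)).card := by
  intro P hP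
  induction P with
  | nil => simp [hE]
  | cons B P ih =>
    rw [List.pairwise_cons] at hP
    simp only [List.map_cons, List.sum_cons, List.foldr_cons]
    rw [hU, Finset.card_union_of_disjoint
      (hdisj _ _ (disjoint_foldrUnion hP.1)), ih hP.2]

noncomputable def assemble (A : Finset α) (g : ∀ i, Finset (β i)) : Finset (α ⊕ Σ i, β i) :=
  A.image Sum.inl ∪ Finset.univ.biUnion fun i => (g i).image (fun y => Sum.inr ⟨i, y⟩)

lemma mem_assemble {A : Finset α} {g : ∀ i, Finset (β i)} {x : α ⊕ Σ i, β i} :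
    x ∈ assemble A g ↔ (∃ a ∈ A, x = Sum.inl a) ∨ ∃ i, ∃ y ∈ g i, x = Sum.inr ⟨i, y⟩ := by
  simp only [assemble, Finset.mem_union, Finset.mem_image, Finset.mem_biUnion, Finset.mem_univ,
    true_and]
  constructor
  · rintro (⟨a, ha, rfl⟩ | ⟨i, y, hy, rfl⟩)
    · exact Or.inl ⟨a, ha, rfl⟩
    · exact Or.inr ⟨i, y, hy, rfl⟩
  · rintro (⟨a, ha, rfl⟩ | ⟨i, y, hy, rfl⟩)
    · exact Or.inl ⟨a, ha, rfl⟩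
    · exact Or.inr ⟨i, y, hy, rfl⟩

lemma fib0_assemble {A : Finset α} {g : ∀ i, Finset (β i)} : fib0 (assemble A g) = A := by
  ext x
  rw [mem_fib0, mem_assemble]
  simp

lemma fib_assemble {A : Finset α} {g : ∀ i, Finset (β i)} {i : Fin k} :
    fib i (assemble A g) = g i := by
  ext y
  rw [mem_fib, mem_assemble]
  constructor
  · rintro (⟨a, _, h⟩ | ⟨i', y', hy', h⟩)
    · exact absurd h (by simp)
    · obtain ⟨h1, h2⟩ := Sigma.mk.inj_iff.1 (Sum.inr.inj h).symm
      subst h1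
      obtain rfl := eq_of_heq h2
      exact hy'
  · intro hy
    exact Or.inr ⟨i, y, hy, rfl⟩

lemma card_assemble (A : Finset α) (g : ∀ i, Finset (β i)) :
    (assemble A g).card = A.card + ∑ i, (g i).card := by
  rw [card_fib_sum (assemble A g), fib0_assemble]
  congr 1
  exact Finset.sum_congr rfl fun i _ => by rw [fib_assemble]

lemma assemble_disjoint {A A' : Finset α} {g g' : ∀ i, Finset (β i)}
    (h0 : Disjoint A A') (h : ∀ i, Disjoint (g i) (g' i)) :
    Disjoint (assemble A g) (assemble A' g') := by
  rw [Finset.disjoint_left]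
  intro x hx hx'
  rw [mem_assemble] at hx hx'
  rcases hx with ⟨a, ha, rfl⟩ | ⟨i, y, hy, rfl⟩
  · rcases hx' with ⟨a', ha', heq⟩ | ⟨i', y', _, heq⟩
    · obtain rfl := Sum.inl.inj heq
      exact Finset.disjoint_left.1 h0 ha ha'
    · exact absurd heq (by simp)
  · rcases hx' with ⟨a', _, heq⟩ | ⟨i', y', hy', heq⟩
    · exact absurd heq (by simp)
    · obtain ⟨h1, h2⟩ := Sigma.mk.inj_iff.1 (Sum.inr.inj heq).symm
      subst h1
      obtain rfl := eq_of_heq h2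
      exact Finset.disjoint_left.1 (h i') hy hy'
end sumfib

section conn
variable {V₀ : Type} {k : ℕ} {V : Fin k → Type}

lemma connected_of_isRP_univ {W : Type} [Fintype W] [DecidableEq W] [Nonempty W]
    {G : SimpleGraph W} (h : G.IsRP Finset.univ) : G.Preconnected := by
  rw [SimpleGraph.IsRP] at h
  rcases h with h1 | ⟨hc, -⟩
  · rw [Finset.card_univ] at h1
    have hsub := Fintype.card_le_one_iff.1 (le_of_eq h1)
    intro u v
    rw [hsub u v]
  · have hcoe : ((Finset.univ : Finset W) : Set W) = Set.univ := Finset.coe_univ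
    rw [hcoe] at hc
    exact ((SimpleGraph.induceUnivIso G).connected_iff.1 hc).preconnected

def repJoinHomL (G₀ : SimpleGraph V₀) (G : ∀ i, SimpleGraph (V i)) :
    G₀ →g G₀.repJoin G where
  toFun := Sum.inl
  map_rel' := fun h => h

lemma repJoin_connected [Fintype V₀] [DecidableEq V₀] [Nonempty V₀]
    (G₀ : SimpleGraph V₀) (G : ∀ i, SimpleGraph (V i))
    (h₀ : G₀.IsRP Finset.univ) : (G₀.repJoin G).Connected := by
  have hpre := connected_of_isRP_univ h₀
  obtain ⟨x₀⟩ := ‹Nonempty V₀›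
  have reach : ∀ u, (G₀.repJoin G).Reachable u (Sum.inl x₀) := by
    rintro (y | z)
    · exact (hpre y x₀).map (repJoinHomL G₀ G)
    · exact SimpleGraph.Adj.reachable (by exact trivial)
  exact ⟨fun u v => (reach u).trans (reach v).symm⟩

def sumIdx {V₀ : Type} {k : ℕ} {V : Fin k → Type} (d : Fin k) : (V₀ ⊕ Σ i, V i) → Fin k
  | Sum.inl _ => d
  | Sum.inr z => z.1

lemma repJoin_index_const [DecidableEq V₀] [∀ i, DecidableEq (V i)]
    (G₀ : SimpleGraph V₀) (G : ∀ i, SimpleGraph (V i)) {S : Finset (V₀ ⊕ Σ i, V i)}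
    (h0 : fib0 S = ∅)
    (hconn : ((G₀.repJoin G).induce (S : Set (V₀ ⊕ Σ i, V i))).Connected)
    {i j : Fin k} {y : V i} {z : V j}
    (hy : Sum.inr ⟨i, y⟩ ∈ S) (hz : Sum.inr ⟨j, z⟩ ∈ S) : i = j := by
  have hnoinl : ∀ x, Sum.inl x ∉ S := by
    intro x hx
    have := mem_fib0.2 hx
    rw [h0] at this
    exact absurd this (Finset.notMem_empty x)
  have key : ∀ {u v : ↥(S : Set (V₀ ⊕ Σ i, V i))},
      ((G₀.repJoin G).induce (S : Set (V₀ ⊕ Σ i, V i))).Walk u v →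
        sumIdx i u.val = sumIdx i v.val := by
    intro u v w
    induction w with
    | nil => rfl
    | @cons a b c hab _ ih =>
      refine Eq.trans ?_ ih
      obtain ⟨(xa | za), ha⟩ := a
      · exact absurd (Finset.mem_coe.1 ha) (hnoinl xa)
      obtain ⟨(xb | zb), hb⟩ := b
      · exact absurd (Finset.mem_coe.1 hb) (hnoinl xb)
      obtain ⟨h, -⟩ := hab
      exact h
  obtain ⟨w⟩ := hconn.preconnected ⟨Sum.inr ⟨i, y⟩, Finset.mem_coe.2 hy⟩
    ⟨Sum.inr ⟨j, z⟩, Finset.mem_coe.2 hz⟩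
  exact key w
end conn

section gadgets

lemma semistar_sub {b₀ : ℕ} {k : ℕ} {b : Fin k → ℕ} {S : Finset (Fin b₀ ⊕ Σ i, Fin (b i))}
    (hS : (SimpleGraph.semistar b₀ b).IsRP S)
    {k' : ℕ} (nz : Fin k' → Fin k) (hnzinj : Function.Injective nz)
    (hcover : ∀ i, fib i S ≠ ∅ → ∃ i', nz i' = i) :
    (SimpleGraph.semistar (fib0 S).card (fun i' => (fib (nz i') S).card)).IsRP Finset.univ := by
  classical
  set A₀ := fib0 S with hA₀
  let g : (Fin A₀.card ⊕ Σ i', Fin ((fib (nz i') S).card)) → (Fin b₀ ⊕ Σ i, Fin (b i)) :=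
    fun a => match a with
    | Sum.inl x' => Sum.inl (A₀.equivFin.symm x').val
    | Sum.inr ⟨i', y'⟩ => Sum.inr ⟨nz i', ((fib (nz i') S).equivFin.symm y').val⟩
  have hinj : Function.Injective g := by
    rintro (x' | ⟨i', v⟩) (y' | ⟨j', w⟩) h
    · simp only [g, Sum.inl.injEq] at h
      exact congrArg Sum.inl (A₀.equivFin.symm.injective (Subtype.val_injective h))
    · exact absurd h (by simp [g])
    · exact absurd h (by simp [g])
    · simp only [g, Sum.inr.injEq] at h
      obtain ⟨h1, h2⟩ := Sigma.mk.inj_iff.1 h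
      obtain rfl : i' = j' := hnzinj h1
      obtain h3 := Subtype.val_injective (eq_of_heq h2)
      rw [(fib (nz i') S).equivFin.symm.injective h3]
  have himg : Finset.univ.image g = S := by
    apply Finset.eq_of_subset_of_card_le
    · intro x hx
      obtain ⟨a, _, rfl⟩ := Finset.mem_image.1 hx
      match a with
      | Sum.inl x' => exact mem_fib0.1 (A₀.equivFin.symm x').2
      | Sum.inr ⟨i', y'⟩ => exact mem_fib.1 ((fib (nz i') S).equivFin.symm y').2
    · rw [Finset.card_image_of_injective _ hinj, Finset.card_univ, Fintype.card_sum,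
        Fintype.card_sigma]
      simp only [Fintype.card_fin]
      rw [card_fib_sum S, ← hA₀]
      have h1 : ∑ i ∈ Finset.univ.image nz, (fib i S).card
          = ∑ i' : Fin k', (fib (nz i') S).card :=
        Finset.sum_image (fun a _ b _ h => hnzinj h)
      have h2 : ∑ i ∈ Finset.univ.image nz, (fib i S).card = ∑ i : Fin k, (fib i S).card := by
        apply Finset.sum_subset (Finset.subset_univ _)
        intro i _ hi
        by_contra hne
        have hfib : fib i S ≠ ∅ := fun hh => hne (by rw [hh]; rfl)
        obtain ⟨i', rfl⟩ := hcover i hfib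
        exact hi (Finset.mem_image.2 ⟨i', Finset.mem_univ _, rfl⟩)
      rw [← h2, h1]
  have hadj : ∀ a ∈ (Finset.univ : Finset (Fin A₀.card ⊕ Σ i', Fin ((fib (nz i') S).card))),
      ∀ c ∈ (Finset.univ : Finset (Fin A₀.card ⊕ Σ i', Fin ((fib (nz i') S).card))),
      ((SimpleGraph.semistar A₀.card (fun i' => (fib (nz i') S).card)).Adj a c ↔
        (SimpleGraph.semistar b₀ b).Adj (g a) (g c)) := by
    rintro (x' | ⟨i', v⟩) - (y' | ⟨j', w⟩) -
    · show x' ≠ y' ↔ (A₀.equivFin.symm x').val ≠ (A₀.equivFin.symm y').val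
      constructor
      · intro h hc
        exact h (A₀.equivFin.symm.injective (Subtype.val_injective hc))
      · intro h hc
        exact h (by rw [hc])
    · show True ↔ True; rfl
    · show True ↔ True; rfl
    · show (∃ h : i' = j', _) ↔ (∃ h : nz i' = nz j', _)
      constructor
      · rintro ⟨h, hne⟩
        subst h
        refine ⟨rfl, ?_⟩
        show ((fib (nz i') S).equivFin.symm v).val ≠ ((fib (nz i') S).equivFin.symm w).val
        intro hc
        exact hne ((fib (nz i') S).equivFin.symm.injective (Subtype.val_injective hc))
      · rintro ⟨h, hne⟩
        obtain rfl : i' = j' := hnzinj h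
        refine ⟨rfl, ?_⟩
        intro hc
        exact hne (congrArg (fun t => ((fib (nz i') S).equivFin.symm t).val) hc)
  have := (isRP_map_iff (SimpleGraph.semistar A₀.card (fun i' => (fib (nz i') S).card))
    (SimpleGraph.semistar b₀ b) (Finset.univ.card) Finset.univ g rfl
    (hinj.injOn) hadj)
  rw [himg] at this
  exact this.2 hS

lemma repJoin_single {V₀ : Type} [DecidableEq V₀] {k : ℕ} {V : Fin k → Type}
    [∀ i, DecidableEq (V i)] (G₀ : SimpleGraph V₀) (G : ∀ i, SimpleGraph (V i))
    {i₀ : Fin k} {C : Finset (V i₀)} (hC : (G i₀).IsRP C) :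
    (G₀.repJoin G).IsRP (C.image (fun y => Sum.inr ⟨i₀, y⟩)) := by
  have hinj : Function.Injective (fun y : V i₀ => (Sum.inr ⟨i₀, y⟩ : V₀ ⊕ Σ i, V i)) := by
    intro a b h
    simp only [Sum.inr.injEq] at h
    exact eq_of_heq (Sigma.mk.inj_iff.1 h).2
  refine (isRP_map_iff (G i₀) (G₀.repJoin G) C.card C _ rfl hinj.injOn ?_).1 hC
  intro a _ c _
  show (G i₀).Adj a c ↔ ∃ h : i₀ = i₀, (G i₀).Adj (h ▸ a) c
  exact ⟨fun h => ⟨rfl, h⟩, fun ⟨h, hadj⟩ => hadj⟩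

lemma repJoin_assemble {V₀ : Type} [Fintype V₀] [DecidableEq V₀] {k : ℕ}
    {V : Fin k → Type} [∀ i, Fintype (V i)] [∀ i, DecidableEq (V i)]
    (G₀ : SimpleGraph V₀) (G : ∀ i, SimpleGraph (V i))
    (C₀ : Finset V₀) (C : ∀ i, Finset (V i))
    {k' : ℕ} (nz : Fin k' → Fin k) (hnzinj : Function.Injective nz)
    (hcover : ∀ i, C i ≠ ∅ → ∃ i', nz i' = i)
    (h : ((G₀.induce (C₀ : Set V₀)).repJoin
      (fun i' => (G (nz i')).induce ((C (nz i') : Finset (V (nz i'))) : Set (V (nz i'))))).IsRP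
        Finset.univ) :
    (G₀.repJoin G).IsRP (assemble C₀ C) := by
  classical
  let g : (↥(C₀ : Set V₀) ⊕ Σ i', ↥((C (nz i') : Finset (V (nz i'))) : Set (V (nz i')))) →
      (V₀ ⊕ Σ i, V i) :=
    fun a => match a with
    | Sum.inl x => Sum.inl x.val
    | Sum.inr ⟨i', y⟩ => Sum.inr ⟨nz i', y.val⟩
  have hinj : Function.Injective g := by
    rintro (x | ⟨i', v⟩) (y | ⟨j', w⟩) h
    · simp only [g, Sum.inl.injEq] at h
      rw [Subtype.ext h]
    · exact absurd h (by simp [g])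
    · exact absurd h (by simp [g])
    · simp only [g, Sum.inr.injEq] at h
      obtain ⟨h1, h2⟩ := Sigma.mk.inj_iff.1 h
      obtain rfl : i' = j' := hnzinj h1
      rw [Subtype.ext (eq_of_heq h2)]
  have himg : Finset.univ.image g = assemble C₀ C := by
    ext x
    rw [mem_assemble, Finset.mem_image]
    constructor
    · rintro ⟨a, -, rfl⟩
      match a with
      | Sum.inl x => exact Or.inl ⟨x.val, by simpa using x.2, rfl⟩
      | Sum.inr ⟨i', y⟩ => exact Or.inr ⟨nz i', y.val, by simpa using y.2, rfl⟩
    · rintro (⟨a, ha, rfl⟩ | ⟨i, y, hy, rfl⟩)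
      · exact ⟨Sum.inl ⟨a, by simpa using ha⟩, Finset.mem_univ _, rfl⟩
      · have hne : C i ≠ ∅ := fun hc => by rw [hc] at hy; exact absurd hy (Finset.notMem_empty y)
        obtain ⟨i', rfl⟩ := hcover i hne
        exact ⟨Sum.inr ⟨i', ⟨y, by simpa using hy⟩⟩, Finset.mem_univ _, rfl⟩
  have hadj : ∀ a ∈ (Finset.univ : Finset _), ∀ c ∈ (Finset.univ : Finset _),
      (((G₀.induce (C₀ : Set V₀)).repJoin
        (fun i' => (G (nz i')).induce ((C (nz i') : Finset (V (nz i'))) : Set _))).Adj a c ↔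
        (G₀.repJoin G).Adj (g a) (g c)) := by
    rintro (x | ⟨i', v⟩) - (y | ⟨j', w⟩) -
    · exact Iff.rfl
    · show True ↔ True; rfl
    · show True ↔ True; rfl
    · show (∃ h : i' = j', _) ↔ (∃ h : nz i' = nz j', _)
      constructor
      · rintro ⟨h, hadj⟩
        subst h
        exact ⟨rfl, hadj⟩
      · rintro ⟨h, hadj⟩
        obtain rfl : i' = j' := hnzinj h
        exact ⟨rfl, hadj⟩
  have := (isRP_map_iff _ (G₀.repJoin G) (Finset.univ.card) Finset.univ g rfl
    hinj.injOn hadj).1 h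
  rwa [himg] at this
end gadgets

lemma induce_isRP {W : Type} [DecidableEq W] {Gw : SimpleGraph W} {C : Finset W}
    (hC : Gw.IsRP C) : (Gw.induce (C : Set W)).IsRP Finset.univ := by
  have himg : (Finset.univ : Finset ↥(C : Set W)).image Subtype.val = C := by
    ext x
    simp only [Finset.mem_image, Finset.mem_univ, true_and]
    constructor
    · rintro ⟨⟨a, ha⟩, rfl⟩
      exact ha
    · intro hx
      exact ⟨⟨x, hx⟩, rfl⟩
  exact (isRP_map_iff _ Gw Finset.univ.card Finset.univ Subtype.val rfl
    Subtype.val_injective.injOn (fun _ _ _ _ => Iff.rfl)).2 (by rwa [himg])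

lemma card_setcoe {W : Type} (C : Finset W) : Fintype.card ↥(C : Set W) = C.card :=
  Fintype.card_coe C

lemma main_aux : ∀ (n : ℕ) {V₀ : Type} [Fintype V₀] [DecidableEq V₀] {k : ℕ}
    {V : Fin k → Type} [∀ i, Fintype (V i)] [∀ i, DecidableEq (V i)]
    (b₀ : ℕ) (b : Fin k → ℕ),
    (SimpleGraph.semistar b₀ b).IsRP Finset.univ →
    ∀ (G₀ : SimpleGraph V₀) (G : ∀ i, SimpleGraph (V i)),
    Fintype.card V₀ = b₀ → (∀ i, Fintype.card (V i) = b i) →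
    G₀.IsRP Finset.univ → (∀ i, (G i).IsRP Finset.univ) →
    Fintype.card (V₀ ⊕ Σ i, V i) = n →
    (G₀.repJoin G).IsRP Finset.univ := by
  intro n
  induction n using Nat.strong_induction_on with
  | _ n ih =>
  intro V₀ _ _ k V _ _ b₀ b hsemi G₀ G hcard₀ hcard hG₀ hG hn
  classical
  haveI : Nonempty V₀ := ⟨(isRP_nonempty hG₀).choose⟩
  have hWcard : Fintype.card (Fin b₀ ⊕ Σ i, Fin (b i)) = n := by
    rw [← hn]
    simp only [Fintype.card_sum, Fintype.card_sigma, Fintype.card_fin, hcard₀, hcard]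
  rw [SimpleGraph.IsRP]
  by_cases h1 : (Finset.univ : Finset (V₀ ⊕ Σ i, V i)).card = 1
  · exact Or.inl h1
  refine Or.inr ⟨?_, ?_⟩
  · have hconn := repJoin_connected G₀ G hG₀
    have hcoe : ((Finset.univ : Finset (V₀ ⊕ Σ i, V i)) : Set (V₀ ⊕ Σ i, V i)) = Set.univ := by
      ext x; simp
    rw [hcoe]
    exact (SimpleGraph.induceUnivIso _).connected_iff.2 hconn
  intro l hpos hlen hsumu
  have hsumn : l.sum = n := by rwa [Finset.card_univ, hn] at hsumu
  have hcardW : (Finset.univ : Finset (Fin b₀ ⊕ Σ i, Fin (b i))).card = n := by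
    rw [Finset.card_univ, hWcard]
  have hn2 : 2 ≤ n := by
    match l, hlen, hpos, hsumn with
    | a :: c :: t, _, hpos, hsumn =>
      have ha := hpos a (by simp)
      have hc := hpos c (by simp)
      simp only [List.sum_cons] at hsumn
      omega
  rw [SimpleGraph.IsRP] at hsemi
  rcases hsemi with hs1 | ⟨-, hpart⟩
  · rw [hcardW] at hs1; omega
  obtain ⟨Ps, hPc, hPd, hPu, hPrp⟩ := hpart l hpos hlen (by rw [hcardW, hsumn])
  have hRPs : ∀ Sp ∈ Ps, (SimpleGraph.semistar b₀ b).IsRP Sp := fun Sp hSp =>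
    hPrp _ hSp (part_card_lt hPc hPd hPu hpos hlen hSp)
  -- split the host graphs
  have hfib0univ : fib0 (Finset.univ : Finset (Fin b₀ ⊕ Σ i, Fin (b i))) = Finset.univ := by
    ext x; simp
  have hfibuniv : ∀ i, fib i (Finset.univ : Finset (Fin b₀ ⊕ Σ i, Fin (b i))) = Finset.univ := by
    intro i; ext y; simp
  obtain ⟨Q₀, hQ₀c, hQ₀d, hQ₀u, hQ₀rp⟩ := splitRP hG₀ (Ps.map (fun Sp => (fib0 Sp).card))
    (by
      rw [sum_card_hom fib0 fib0_union (fun _ _ => fib0_disjoint) fib0_empty Ps hPd, hPu,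
        hfib0univ, Finset.card_univ, Finset.card_univ, Fintype.card_fin, hcard₀])
  have hQi : ∀ i, ∃ Qi : List (Finset (V i)), Qi.map Finset.card =
      Ps.map (fun Sp => (fib i Sp).card) ∧ Qi.Pairwise _root_.Disjoint ∧
      Qi.foldr (· ∪ ·) ∅ = Finset.univ ∧ ∀ B ∈ Qi, B = ∅ ∨ (G i).IsRP B := by
    intro i
    refine splitRP (hG i) _ ?_
    rw [sum_card_hom (fib i) (fib_union i) (fun _ _ => fib_disjoint) (fib_empty i) Ps hPd, hPu,
      hfibuniv i, Finset.card_univ, Finset.card_univ, Fintype.card_fin, hcard i]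
  choose Q hQc hQd hQu hQrp using hQi
  -- lengths
  have hPslen : Ps.length = l.length := by
    have := congrArg List.length hPc; simpa using this
  have hQ₀len : Q₀.length = Ps.length := by
    have := congrArg List.length hQ₀c; simpa using this
  have hQlen : ∀ i, (Q i).length = Ps.length := by
    intro i; have := congrArg List.length (hQc i); simpa using this
  -- the assembled parts
  set Tp : ℕ → Finset (V₀ ⊕ Σ i, V i) :=
    fun j => assemble (Q₀.getD j ∅) (fun i => (Q i).getD j ∅) with hTp
  -- card identities
  have hcardQ₀ : ∀ (j : ℕ), j < Ps.length → (Q₀.getD j ∅).card = (fib0 (Ps.getD j ∅)).card := by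
    intro j hj
    rw [List.getD_eq_getElem _ _ (by omega : j < Q₀.length),
      List.getD_eq_getElem _ _ hj]
    have h := List.getElem_of_eq hQ₀c
      (show j < (Q₀.map Finset.card).length by rw [List.length_map]; omega)
    rw [List.getElem_map, List.getElem_map] at h
    exact h
  have hcardQ : ∀ i (j : ℕ), j < Ps.length →
      ((Q i).getD j ∅).card = (fib i (Ps.getD j ∅)).card := by
    intro i j hj
    rw [List.getD_eq_getElem _ _ (by rw [hQlen i]; omega : j < (Q i).length),
      List.getD_eq_getElem _ _ hj]
    have h := List.getElem_of_eq (hQc i)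
      (show j < ((Q i).map Finset.card).length by rw [List.length_map, hQlen i]; omega)
    rw [List.getElem_map, List.getElem_map] at h
    exact h
  have hcardTp : ∀ (j : ℕ), j < Ps.length → (Tp j).card = (Ps.getD j ∅).card := by
    intro j hj
    rw [hTp]
    rw [card_assemble, hcardQ₀ j hj]
    rw [card_fib_sum (Ps.getD j ∅)]
    congr 1
    exact Finset.sum_congr rfl fun i _ => hcardQ i j hj
  have hcardPs : ∀ (j : ℕ) (hj : j < Ps.length), (Ps.getD j ∅).card = l.getD j 0 := by
    intro j hj
    rw [List.getD_eq_getElem _ _ hj, List.getD_eq_getElem _ _ (by omega : j < l.length)]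
    have h := List.getElem_of_eq hPc
      (show j < (Ps.map Finset.card).length by rw [List.length_map]; omega)
    rw [List.getElem_map] at h
    exact h
  refine ⟨List.ofFn (fun j : Fin Ps.length => Tp j.val), ?_, ?_, ?_, ?_⟩
  · -- map card = l
    refine List.ext_getElem (by simp [hPslen]) ?_
    intro j h₁ h₂
    have hj : j < Ps.length := by simpa using h₁
    rw [List.getElem_map, List.getElem_ofFn]
    rw [hcardTp j hj, hcardPs j hj, List.getD_eq_getElem _ _ h₂]
  · -- pairwise disjoint
    rw [List.pairwise_iff_getElem]
    intro j j' hj hj' hlt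
    rw [List.length_ofFn] at hj hj'
    simp only [List.getElem_ofFn]
    refine assemble_disjoint ?_ ?_
    · have hd := List.pairwise_iff_getElem.1 hQ₀d j j'
        (by omega) (by omega) hlt
      rwa [List.getD_eq_getElem _ _ (by omega : j < Q₀.length),
        List.getD_eq_getElem _ _ (by omega : j' < Q₀.length)]
    · intro i
      have hd := List.pairwise_iff_getElem.1 (hQd i) j j'
        (by rw [hQlen i]; omega) (by rw [hQlen i]; omega) hlt
      rwa [List.getD_eq_getElem _ _ (by rw [hQlen i]; omega : j < (Q i).length),
        List.getD_eq_getElem _ _ (by rw [hQlen i]; omega : j' < (Q i).length)]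
  · -- union = univ
    apply Finset.eq_univ_of_forall
    intro x
    rw [mem_foldrUnion]
    match x with
    | Sum.inl a =>
      have : a ∈ Q₀.foldr (· ∪ ·) ∅ := by rw [hQ₀u]; exact Finset.mem_univ a
      obtain ⟨B, hB, haB⟩ := mem_foldrUnion.1 this
      obtain ⟨j, hj, rfl⟩ := List.mem_iff_getElem.1 hB
      refine ⟨Tp j, ?_, ?_⟩
      · rw [List.mem_ofFn]
        exact ⟨⟨j, by omega⟩, rfl⟩
      · rw [hTp, mem_assemble]
        exact Or.inl ⟨a, by rwa [List.getD_eq_getElem _ _ hj], rfl⟩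
    | Sum.inr ⟨i, y⟩ =>
      have : y ∈ (Q i).foldr (· ∪ ·) ∅ := by rw [hQu i]; exact Finset.mem_univ y
      obtain ⟨B, hB, hyB⟩ := mem_foldrUnion.1 this
      obtain ⟨j, hj, rfl⟩ := List.mem_iff_getElem.1 hB
      refine ⟨Tp j, ?_, ?_⟩
      · rw [List.mem_ofFn]
        exact ⟨⟨j, by rw [← hQlen i]; omega⟩, rfl⟩
      · rw [hTp, mem_assemble]
        exact Or.inr ⟨i, y, by rwa [List.getD_eq_getElem _ _ hj], rfl⟩
  · -- each part is RP
    intro B hB hguard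
    rw [List.mem_ofFn] at hB
    obtain ⟨⟨j, hj⟩, rfl⟩ := hB
    show (G₀.repJoin G).IsRP (Tp j)
    set S : Finset (Fin b₀ ⊕ Σ i, Fin (b i)) := Ps.getD j ∅ with hS
    have hSmem : S ∈ Ps := by
      rw [hS, List.getD_eq_getElem _ _ hj]; exact List.getElem_mem hj
    have hSrp : (SimpleGraph.semistar b₀ b).IsRP S := hRPs S hSmem
    have hTc : (Tp j).card = S.card := hcardTp j hj
    set D₀ : Finset V₀ := Q₀.getD j ∅ with hD₀
    set D : ∀ i, Finset (V i) := fun i => (Q i).getD j ∅ with hD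
    have hD₀mem : D₀ ∈ Q₀ := by
      rw [hD₀, List.getD_eq_getElem _ _ (by omega : j < Q₀.length)]
      exact List.getElem_mem _
    have hDmem : ∀ i, D i ∈ Q i := by
      intro i
      show (Q i).getD j ∅ ∈ Q i
      rw [List.getD_eq_getElem _ _ (by rw [hQlen i]; omega : j < (Q i).length)]
      exact List.getElem_mem _
    have hcD₀ : D₀.card = (fib0 S).card := hcardQ₀ j hj
    have hcD : ∀ i, (D i).card = (fib i S).card := fun i => hcardQ i j hj
    have hTpD : Tp j = assemble D₀ D := rfl
    have hguard' : S.card < n := by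
      rw [← hTc]
      rwa [Finset.card_univ, hn] at hguard
    by_cases hfib0 : fib0 S = ∅
    · -- clique-internal case
      have hpos' : 0 < S.card := Finset.card_pos.2 (isRP_nonempty hSrp)
      rcases Nat.lt_or_ge S.card 2 with hone | htwo
      · -- |S| = 1
        rw [SimpleGraph.IsRP]
        exact Or.inl (by rw [hTc]; omega)
      · -- |S| ≥ 2
        rw [SimpleGraph.IsRP] at hSrp
        rcases hSrp with hc1 | ⟨hscon, -⟩
        · omega
        obtain ⟨x₀, hx₀⟩ := Finset.card_pos.1 hpos'
        match x₀, hx₀ with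
        | Sum.inl a, hx₀ =>
          exact absurd (hfib0 ▸ mem_fib0.2 hx₀) (Finset.notMem_empty a)
        | Sum.inr ⟨i₀, y₀⟩, hx₀ =>
        have hidx : ∀ (i : Fin k) (y : Fin (b i)), Sum.inr ⟨i, y⟩ ∈ S → i = i₀ :=
          fun i y h => repJoin_index_const _ _ hfib0 hscon h hx₀
        have hfibne : ∀ i, i ≠ i₀ → fib i S = ∅ := by
          intro i hne
          rw [Finset.eq_empty_iff_forall_notMem]
          intro y hy
          exact hne (hidx i y (mem_fib.1 hy))
        have hD₀e : D₀ = ∅ := by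
          rw [← Finset.card_eq_zero, hcD₀, hfib0, Finset.card_empty]
        have hDe : ∀ i, i ≠ i₀ → D i = ∅ := by
          intro i hne
          rw [← Finset.card_eq_zero, hcD i, hfibne i hne, Finset.card_empty]
        have hDi₀ : (G i₀).IsRP (D i₀) := by
          refine (hQrp i₀ (D i₀) (hDmem i₀)).resolve_left ?_
          intro he
          have hz : (D i₀).card = 0 := by rw [he]; rfl
          rw [hcD i₀] at hz
          have hy : y₀ ∈ fib i₀ S := mem_fib.2 hx₀
          rw [Finset.card_eq_zero.1 hz] at hy
          exact absurd hy (Finset.notMem_empty y₀)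
        have heq : (D i₀).image (fun y => (Sum.inr ⟨i₀, y⟩ : V₀ ⊕ Σ i, V i)) = Tp j := by
          rw [hTpD]
          ext x
          rw [mem_assemble, Finset.mem_image]
          constructor
          · rintro ⟨y, hy, rfl⟩
            exact Or.inr ⟨i₀, y, hy, rfl⟩
          · rintro (⟨a, ha, rfl⟩ | ⟨i, y, hy, rfl⟩)
            · rw [hD₀e] at ha
              exact absurd ha (Finset.notMem_empty a)
            · rcases eq_or_ne i i₀ with rfl | hne
              · exact ⟨y, hy, rfl⟩
              · rw [hDe i hne] at hy
                exact absurd hy (Finset.notMem_empty y)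
        rw [← heq]
        exact repJoin_single G₀ G hDi₀
    · -- main case: apply induction hypothesis
      set sup : Finset (Fin k) := Finset.univ.filter (fun i => fib i S ≠ ∅) with hsup
      set nz : Fin sup.card → Fin k := fun i' => ((sup.orderIsoOfFin rfl) i').val with hnz
      have hnzinj : Function.Injective nz :=
        fun a c h => (sup.orderIsoOfFin rfl).injective (Subtype.ext h)
      have hnzmem : ∀ i', nz i' ∈ sup := fun i' => ((sup.orderIsoOfFin rfl) i').2
      have hcover : ∀ i, fib i S ≠ ∅ → ∃ i', nz i' = i := by
        intro i hi
        refine ⟨(sup.orderIsoOfFin rfl).symm ⟨i, by rw [hsup]; simp [hi]⟩, ?_⟩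
        show ((sup.orderIsoOfFin rfl) ((sup.orderIsoOfFin rfl).symm _)).val = i
        rw [OrderIso.apply_symm_apply]
      have hsemi' := semistar_sub hSrp nz hnzinj hcover
      have hfibnz : ∀ i', fib (nz i') S ≠ ∅ := by
        intro i'
        have h := hnzmem i'
        rw [hsup, Finset.mem_filter] at h
        exact h.2
      have hD₀ne : D₀ ≠ ∅ := by
        intro he
        have hz : D₀.card = 0 := by rw [he]; rfl
        rw [hcD₀] at hz
        exact hfib0 (Finset.card_eq_zero.1 hz)
      have hD₀rp : G₀.IsRP D₀ := (hQ₀rp D₀ hD₀mem).resolve_left hD₀ne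
      have hDrp : ∀ i', (G (nz i')).IsRP (D (nz i')) := by
        intro i'
        refine (hQrp (nz i') (D (nz i')) (hDmem (nz i'))).resolve_left ?_
        intro he
        have hz : (D (nz i')).card = 0 := by rw [he]; rfl
        rw [hcD (nz i')] at hz
        exact hfibnz i' (Finset.card_eq_zero.1 hz)
      have hm' : Fintype.card (↥(D₀ : Set V₀) ⊕ Σ i', ↥(D (nz i') : Set (V (nz i')))) =
          S.card := by
        rw [Fintype.card_sum, Fintype.card_sigma]
        rw [card_setcoe]
        rw [card_fib_sum S, hcD₀]
        congr 1
        have h1 : ∀ i', Fintype.card ↥(D (nz i') : Set (V (nz i'))) = (fib (nz i') S).card :=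
          fun i' => by rw [card_setcoe]; exact hcD (nz i')
        rw [Finset.sum_congr rfl (fun i' _ => h1 i')]
        have h2 : ∑ i ∈ Finset.univ.image nz, (fib i S).card
            = ∑ i' : Fin sup.card, (fib (nz i') S).card :=
          Finset.sum_image (fun a _ c _ h => hnzinj h)
        have h3 : ∑ i ∈ Finset.univ.image nz, (fib i S).card = ∑ i : Fin k, (fib i S).card := by
          apply Finset.sum_subset (Finset.subset_univ _)
          intro i _ hi
          by_contra hne
          have hfib : fib i S ≠ ∅ := fun hh => hne (by rw [hh]; rfl)
          obtain ⟨i', rfl⟩ := hcover i hfib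
          exact hi (Finset.mem_image.2 ⟨i', Finset.mem_univ _, rfl⟩)
        rw [← h2, h3]
      have Hsub := ih S.card (by omega) (fib0 S).card (fun i' => (fib (nz i') S).card)
        hsemi' (G₀.induce (D₀ : Set V₀))
        (fun i' => (G (nz i')).induce (D (nz i') : Set (V (nz i'))))
        (by rw [card_setcoe]; exact hcD₀)
        (fun i' => by rw [card_setcoe]; exact hcD (nz i'))
        (induce_isRP hD₀rp) (fun i' => induce_isRP (hDrp i')) hm'
      have hcover' : ∀ i, D i ≠ ∅ → ∃ i', nz i' = i := by
        intro i hne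
        apply hcover
        intro hfe
        apply hne
        rw [← Finset.card_eq_zero, hcD i, hfe, Finset.card_empty]
      rw [hTpD]
      exact repJoin_assemble G₀ G D₀ D nz hnzinj hcover' Hsub

/-- The RP replacement theorem: if the semistar `K_{b₀}(b₁, …, b_k)` is recursively
partitionable and `G₀, G₁, …, G_k` are recursively partitionable graphs with `n(Gᵢ) = bᵢ`,
then the replacement graph `H = G₀ + (G₁ ∪ ⋯ ∪ G_k)` is recursively partitionable. -/
theorem repJoin_isRP {V₀ : Type} [Fintype V₀] [DecidableEq V₀] {k : ℕ}
    {V : Fin k → Type} [∀ i, Fintype (V i)] [∀ i, DecidableEq (V i)]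
    (b₀ : ℕ) (b : Fin k → ℕ)
    (hsemi : (SimpleGraph.semistar b₀ b).IsRP Finset.univ)
    (G₀ : SimpleGraph V₀) (G : ∀ i, SimpleGraph (V i))
    (hcard₀ : Fintype.card V₀ = b₀) (hcard : ∀ i, Fintype.card (V i) = b i)
    (hG₀ : G₀.IsRP Finset.univ) (hG : ∀ i, (G i).IsRP Finset.univ) :
    (G₀.repJoin G).IsRP Finset.univ :=
  main_aux (Fintype.card (V₀ ⊕ Σ i, V i)) b₀ b hsemi G₀ G hcard₀ hcard hG₀ hG rfl
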